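/- For Re z > 0, the limit as n → ∞ of ∫_{−∞}^{log n} e^{τ z}(1 − e^{τ}/n)ⁿ dτ equals ∫_{−∞}^{∞} e^{τ z} e^{−e^{τ}} dτ, and the latter equals Γ(z). -/

import Mathlib

open Real MeasureTheory Filter Topology

private lemma exp_smul_cpow (z : ℂ) (τ : ℝ) :
    ((Real.exp τ : ℝ) : ℂ) * ((Real.exp τ : ℂ)) ^ (z - 1) = Complex.exp ((τ : ℂ) * z) := by
  rw [Complex.cpow_def_of_ne_zero (by exact_mod_cast (Real.exp_pos τ).ne'),
    ← Complex.ofReal_log (Real.exp_pos τ).le, Real.log_exp]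
  rw [Complex.ofReal_exp, ← Complex.exp_add]
  ring_nf

private lemma exp_image_integral (s : Set ℝ) (hs : MeasurableSet s) (g : ℝ → ℂ) :
    ∫ t in Real.exp '' s, g t = ∫ τ in s, Real.exp τ • g (Real.exp τ) := by
  rw [MeasureTheory.integral_image_eq_integral_abs_deriv_smul hs
    (fun x _ => (Real.hasDerivAt_exp x).hasDerivWithinAt) Real.exp_injective.injOn g]
  exact setIntegral_congr_fun hs fun x _ => by rw [abs_of_pos (Real.exp_pos x)]

/-- For `Re z > 0`, the limit as `n → ∞` of `∫_{-∞}^{log n} e^{τz}(1 - e^τ/n)ⁿ dτ`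
equals `∫_{-∞}^{∞} e^{τz} e^{-e^τ} dτ`, and the latter equals `Γ(z)`. -/
theorem gamma_limit_formula (z : ℂ) (hz : 0 < z.re) :
    Tendsto
      (fun n : ℕ =>
        ∫ τ in Set.Iic (Real.log n),
          Complex.exp ((τ : ℂ) * z) * ((1 - Real.exp τ / n : ℝ) : ℂ) ^ n)
      atTop
      (𝓝 (∫ τ : ℝ, Complex.exp ((τ : ℂ) * z) * ((Real.exp (-Real.exp τ) : ℝ) : ℂ))) ∧
    (∫ τ : ℝ, Complex.exp ((τ : ℂ) * z) * ((Real.exp (-Real.exp τ) : ℝ) : ℂ))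
      = Complex.Gamma z := by
  have h2 : (∫ τ : ℝ, Complex.exp ((τ : ℂ) * z) * ((Real.exp (-Real.exp τ) : ℝ) : ℂ))
      = Complex.Gamma z := by
    rw [Complex.Gamma_eq_integral hz, Complex.GammaIntegral, ← Real.range_exp,
      ← Set.image_univ, exp_image_integral _ MeasurableSet.univ, ← setIntegral_univ]
    refine setIntegral_congr_fun MeasurableSet.univ fun τ _ => ?_
    simp only [Complex.real_smul]
    rw [← exp_smul_cpow z τ]; push_cast; ring
  refine ⟨?_, h2⟩
  rw [h2]
  refine Tendsto.congr' ?_ (Complex.approx_Gamma_integral_tendsto_Gamma_integral hz)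
  filter_upwards [eventually_ge_atTop 1] with n hn
  have hn' : (0 : ℝ) < n := by exact_mod_cast hn
  have himg : Real.exp '' Set.Iic (Real.log n) = Set.Ioc 0 (n : ℝ) := by
    ext t
    constructor
    · rintro ⟨τ, hτ, rfl⟩
      exact ⟨Real.exp_pos τ, by
        calc Real.exp τ ≤ Real.exp (Real.log n) := Real.exp_le_exp.2 hτ
        _ = n := Real.exp_log hn'⟩
    · rintro ⟨ht0, htn⟩
      exact ⟨Real.log t, Real.log_le_log ht0 htn, Real.exp_log ht0⟩
  rw [intervalIntegral.integral_of_le (by positivity : (0:ℝ) ≤ n), ← himg,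
    exp_image_integral _ measurableSet_Iic]
  refine setIntegral_congr_fun measurableSet_Iic fun τ _ => ?_
  simp only [Complex.real_smul]
  rw [← exp_smul_cpow z τ]; push_cast; ring
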